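/- For every q > 0, the set P_I(q) is a convex subset of the interval [0,1]. -/

import Mathlib

open Matrix ComplexOrder

noncomputable section

namespace FRIR

variable {d N : ℕ}

/-- A POVM with `N+1` outcomes on a `d`-dimensional system: `M 0` is the
inconclusive outcome, `M i.succ` is the conclusive outcome for state `i`. -/
def IsPOVM (M : Fin (N + 1) → Matrix (Fin d) (Fin d) ℂ) : Prop :=
  (∀ i, (M i).PosSemidef) ∧ ∑ i, M i = 1

/-- `ρ₀ = ∑ i q_i ρ_i`. -/
def rho0 (q : Fin N → ℝ) (ρ : Fin N → Matrix (Fin d) (Fin d) ℂ) :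
    Matrix (Fin d) (Fin d) ℂ :=
  ∑ i, (q i : ℂ) • ρ i

/-- The probability of the inconclusive result, `P_I = tr(ρ₀ M₀)`. -/
def PIof (q : Fin N → ℝ) (ρ : Fin N → Matrix (Fin d) (Fin d) ℂ)
    (M : Fin (N + 1) → Matrix (Fin d) (Fin d) ℂ) : ℝ :=
  (Matrix.trace (rho0 q ρ * M 0)).re

/-- `P_cor = ∑ i q_i tr(ρ_i M_i)`. -/
def Pcor (q : Fin N → ℝ) (ρ : Fin N → Matrix (Fin d) (Fin d) ℂ)
    (M : Fin (N + 1) → Matrix (Fin d) (Fin d) ℂ) : ℝ :=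
  ∑ i : Fin N, q i * (Matrix.trace (ρ i * M i.succ)).re

/-- `P̄_cor = q·tr(ρ₀M₀) + ∑ i q_i tr(ρ_i M_i)`. -/
def PbarCor (qv : ℝ) (q : Fin N → ℝ) (ρ : Fin N → Matrix (Fin d) (Fin d) ℂ)
    (M : Fin (N + 1) → Matrix (Fin d) (Fin d) ℂ) : ℝ :=
  qv * PIof q ρ M + Pcor q ρ M

/-- `P̄_cor^opt(q)`: the maximal value of `P̄_cor` over all POVMs. -/
def PbarOpt (qv : ℝ) (q : Fin N → ℝ) (ρ : Fin N → Matrix (Fin d) (Fin d) ℂ) : ℝ :=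
  sSup {x : ℝ | ∃ M, IsPOVM M ∧ PbarCor qv q ρ M = x}

/-- `P_cor^opt(Q)`: the maximal value of `P_cor` over POVMs with `P_I = Q`. -/
def PcorOpt (Q : ℝ) (q : Fin N → ℝ) (ρ : Fin N → Matrix (Fin d) (Fin d) ℂ) : ℝ :=
  sSup {x : ℝ | ∃ M, IsPOVM M ∧ PIof q ρ M = Q ∧ Pcor q ρ M = x}

/-- `P_I(q) = { tr(ρ₀M₀) : POVMs attaining P̄_cor^opt(q) }`. -/
def PIset (qv : ℝ) (q : Fin N → ℝ) (ρ : Fin N → Matrix (Fin d) (Fin d) ℂ) : Set ℝ :=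
  {Q : ℝ | ∃ M, IsPOVM M ∧ PbarCor qv q ρ M = PbarOpt qv q ρ ∧ PIof q ρ M = Q}

lemma trace_re_nonneg {A : Matrix (Fin d) (Fin d) ℂ} (hA : A.PosSemidef) :
    0 ≤ A.trace.re := by
  rw [Matrix.trace]
  rw [Complex.re_sum]
  refine Finset.sum_nonneg fun i _ => ?_
  have := hA.re_dotProduct_nonneg (Pi.single i 1)
  simpa [dotProduct, Matrix.mulVec, Pi.single_apply, Finset.mul_sum] using this

open scoped MatrixOrder in
lemma trace_mul_re_nonneg {A B : Matrix (Fin d) (Fin d) ℂ}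
    (hA : A.PosSemidef) (hB : B.PosSemidef) : 0 ≤ (A * B).trace.re := by
  have h1 : A * B = CFC.sqrt A * (CFC.sqrt A * B) := by
    rw [← mul_assoc, CFC.sqrt_mul_sqrt_self A hA.nonneg]
  have h2 : (A * B).trace = (CFC.sqrt A * B * CFC.sqrt A).trace := by
    rw [h1, ← Matrix.trace_mul_comm, mul_assoc]
  rw [h2]
  have hps : (CFC.sqrt A * B * CFC.sqrt A).PosSemidef := by
    have := hB.conjTranspose_mul_mul_same (CFC.sqrt A)
    rwa [(CFC.sqrt_nonneg A).posSemidef.isHermitian.eq] at this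
  exact trace_re_nonneg hps

lemma smul_real_posSemidef {a : ℝ} (ha : 0 ≤ a) {A : Matrix (Fin d) (Fin d) ℂ}
    (hA : A.PosSemidef) : ((a : ℂ) • A).PosSemidef := by
  constructor
  · show _ = _
    rw [Matrix.conjTranspose_smul, hA.1.eq]
    simp [Complex.conj_ofReal]
  · intro x
    exact (hA.smul (Complex.zero_le_real.mpr ha)).2 x

lemma trace_re_comb (ρ₀ : Matrix (Fin d) (Fin d) ℂ) (a b : ℝ)
    (X Y : Matrix (Fin d) (Fin d) ℂ) :
    (Matrix.trace (ρ₀ * ((a : ℂ) • X + (b : ℂ) • Y))).re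
      = a * (Matrix.trace (ρ₀ * X)).re + b * (Matrix.trace (ρ₀ * Y)).re := by
  rw [mul_add, Matrix.mul_smul, Matrix.mul_smul, Matrix.trace_add,
    Matrix.trace_smul, Matrix.trace_smul]
  simp [Complex.add_re, Complex.smul_re]

/-- For every `q > 0`, `P_I(q)` is a convex subset of `[0,1]`. -/
theorem stmt1 {d N : ℕ} (hd : 0 < d) (hN : 0 < N)
    (q : Fin N → ℝ) (ρ : Fin N → Matrix (Fin d) (Fin d) ℂ)
    (hq : ∀ i, 0 < q i) (hqsum : ∑ i, q i = 1)
    (hρ : ∀ i, (ρ i).PosSemidef) (htr : ∀ i, (ρ i).trace = 1)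
    (hρ0 : (rho0 q ρ).PosDef)
    (qv : ℝ) (hqv : 0 < qv) :
    Convex ℝ (PIset qv q ρ) ∧ PIset qv q ρ ⊆ Set.Icc (0 : ℝ) 1 := by
  have hρ0sd : (rho0 q ρ).PosSemidef := hρ0.posSemidef
  -- linearity of PIof, Pcor, PbarCor in M
  have hPI : ∀ (a b : ℝ) (M M' : Fin (N + 1) → Matrix (Fin d) (Fin d) ℂ),
      PIof q ρ (fun i => (a : ℂ) • M i + (b : ℂ) • M' i)
        = a * PIof q ρ M + b * PIof q ρ M' := by
    intro a b M M'
    exact trace_re_comb _ a b _ _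
  have hPcor : ∀ (a b : ℝ) (M M' : Fin (N + 1) → Matrix (Fin d) (Fin d) ℂ),
      Pcor q ρ (fun i => (a : ℂ) • M i + (b : ℂ) • M' i)
        = a * Pcor q ρ M + b * Pcor q ρ M' := by
    intro a b M M'
    unfold Pcor
    rw [Finset.mul_sum, Finset.mul_sum, ← Finset.sum_add_distrib]
    refine Finset.sum_congr rfl fun i _ => ?_
    rw [trace_re_comb]
    ring
  have hPbar : ∀ (a b : ℝ) (M M' : Fin (N + 1) → Matrix (Fin d) (Fin d) ℂ),
      PbarCor qv q ρ (fun i => (a : ℂ) • M i + (b : ℂ) • M' i)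
        = a * PbarCor qv q ρ M + b * PbarCor qv q ρ M' := by
    intro a b M M'
    unfold PbarCor
    rw [hPI, hPcor]
    ring
  constructor
  · -- convexity
    rintro Q ⟨M, hM, hopt, hQ⟩ Q' ⟨M', hM', hopt', hQ'⟩ a b ha hb hab
    refine ⟨fun i => (a : ℂ) • M i + (b : ℂ) • M' i, ⟨?_, ?_⟩, ?_, ?_⟩
    · intro i
      exact (smul_real_posSemidef ha (hM.1 i)).add (smul_real_posSemidef hb (hM'.1 i))
    · rw [Finset.sum_add_distrib, ← Finset.smul_sum, ← Finset.smul_sum, hM.2, hM'.2,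
        ← add_smul, ← Complex.ofReal_add, hab]
      simp
    · rw [hPbar, hopt, hopt', ← add_mul, hab, one_mul]
    · rw [hPI, hQ, hQ']; simp [smul_eq_mul]
  · -- subset of [0,1]
    rintro Q ⟨M, hM, _, hQ⟩
    have h0 : 0 ≤ Q := hQ ▸ trace_mul_re_nonneg hρ0sd (hM.1 0)
    have htr0 : (rho0 q ρ).trace = 1 := by
      unfold rho0
      rw [Matrix.trace_sum]
      simp only [Matrix.trace_smul, smul_eq_mul, htr, mul_one]
      rw [← Complex.ofReal_sum, hqsum, Complex.ofReal_one]
    have hsum : (1 : Matrix (Fin d) (Fin d) ℂ) - M 0 = ∑ i : Fin N, M i.succ := by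
      have := hM.2
      rw [Fin.sum_univ_succ] at this
      rw [← this]
      exact add_sub_cancel_left _ _
    have hps : ((1 : Matrix (Fin d) (Fin d) ℂ) - M 0).PosSemidef := by
      rw [hsum]
      exact Finset.sum_induction _ _ (fun x y hx hy => hx.add hy)
        Matrix.PosSemidef.zero (fun i _ => hM.1 i.succ)
    have h1 : 0 ≤ ((rho0 q ρ) * (1 - M 0)).trace.re :=
      trace_mul_re_nonneg hρ0sd hps
    rw [mul_sub, mul_one, Matrix.trace_sub, Complex.sub_re, htr0] at h1
    have : Q ≤ 1 := by
      have : (Matrix.trace (rho0 q ρ * M 0)).re ≤ 1 := by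
        have := h1
        simp only [Complex.one_re] at this
        linarith
      rw [← hQ]
      exact this
    exact ⟨h0, this⟩

end FRIR
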